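/- Let M be an n×n symmetric negative definite real matrix with nonnegative off-diagonal entries. Then M is invertible and every entry of −M⁻¹ is nonnegative. -/

import Mathlib

lemma mmatrix_mulVec_nonneg {n : ℕ} (A : Matrix (Fin n) (Fin n) ℝ)
    (hA : A.PosDef) (hoff : ∀ i j, i ≠ j → A i j ≤ 0)
    (y : Fin n → ℝ) (hy : ∀ i, 0 ≤ A.mulVec y i) : ∀ i, 0 ≤ y i := by
  set q : Fin n → ℝ := fun i => max (-(y i)) 0 with hqdef
  set p : Fin n → ℝ := fun i => max (y i) 0 with hpdef
  have hq0 : ∀ i, 0 ≤ q i := fun i => le_max_right _ _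
  have hp0 : ∀ i, 0 ≤ p i := fun i => le_max_right _ _
  have hyp : ∀ i, y i = p i - q i := by
    intro i
    simp only [hpdef, hqdef]
    rcases le_total (y i) 0 with h | h
    · rw [max_eq_right h, max_eq_left (by linarith)]; ring
    · rw [max_eq_left h, max_eq_right (by linarith)]; ring
  have hdiag : ∀ i, q i * (A i i * p i) = 0 := by
    intro i
    rcases le_total (y i) 0 with h | h
    · simp [hpdef, max_eq_right h]
    · simp [hqdef, max_eq_right (by linarith : -(y i) ≤ 0)]
  have hS : 0 ≤ ∑ i, q i * A.mulVec y i :=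
    Finset.sum_nonneg fun i _ => mul_nonneg (hq0 i) (hy i)
  have hexp : ∑ i, q i * A.mulVec y i
      = (∑ i, ∑ j, q i * (A i j * p j)) - ∑ i, ∑ j, q i * (A i j * q j) := by
    simp only [Matrix.mulVec, dotProduct]
    rw [← Finset.sum_sub_distrib]
    refine Finset.sum_congr rfl fun i _ => ?_
    rw [Finset.mul_sum, ← Finset.sum_sub_distrib]
    refine Finset.sum_congr rfl fun j _ => ?_
    rw [hyp j]; ring
  have hQp : ∑ i, ∑ j, q i * (A i j * p j) ≤ 0 := by
    refine Finset.sum_nonpos fun i _ => Finset.sum_nonpos fun j _ => ?_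
    rcases eq_or_ne i j with rfl | hij
    · exact le_of_eq (hdiag i)
    · exact mul_nonpos_of_nonneg_of_nonpos (hq0 i)
        (mul_nonpos_of_nonpos_of_nonneg (hoff i j hij) (hp0 j))
  have hQq : ∑ i, ∑ j, q i * (A i j * q j) ≤ 0 := by
    have := hS
    rw [hexp] at this
    linarith
  have hqzero : q = 0 := by
    by_contra hne
    have := hA.dotProduct_mulVec_pos hne
    simp only [star_trivial, dotProduct, Matrix.mulVec, Finset.mul_sum] at this
    exact absurd hQq (not_le.mpr this)
  intro i
  have : q i = 0 := congrFun hqzero i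
  simp only [hqdef] at this
  by_contra h
  push_neg at h
  rw [max_eq_left (by linarith)] at this
  linarith

theorem inverse_nonpos {n : ℕ} (M : Matrix (Fin n) (Fin n) ℝ)
    (hsymm : M.IsSymm)
    (hnegdef : (-M).PosDef)
    (hoff : ∀ i j, i ≠ j → 0 ≤ M i j) :
    IsUnit M.det ∧ ∀ i j, 0 ≤ -(M⁻¹ i j) := by
  have hdetneg : (-M).det ≠ 0 := ne_of_gt hnegdef.det_pos
  have hdet : M.det ≠ 0 := by
    intro h
    apply hdetneg
    rw [Matrix.det_neg, h, mul_zero]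
  have hUnit : IsUnit M.det := isUnit_iff_ne_zero.mpr hdet
  refine ⟨hUnit, fun i j => ?_⟩
  have hinv : (-M)⁻¹ = -(M⁻¹) := by
    apply Matrix.inv_eq_right_inv
    rw [Matrix.neg_mul, Matrix.mul_neg, neg_neg, Matrix.mul_nonsing_inv _ hUnit]
  have hmul : (-M) * (-M)⁻¹ = 1 := by
    rw [hinv, Matrix.neg_mul, Matrix.mul_neg, neg_neg, Matrix.mul_nonsing_inv _ hUnit]
  have key := mmatrix_mulVec_nonneg (-M) hnegdef
    (fun a b hab => by simpa using neg_nonpos_of_nonneg (hoff a b hab))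
    (fun k => (-M)⁻¹ k j)
    (by
      intro k
      have : (-M).mulVec (fun k => (-M)⁻¹ k j) = fun k => ((-M) * (-M)⁻¹) k j := by
        funext k
        simp [Matrix.mulVec, Matrix.mul_apply, dotProduct]
      rw [this, hmul]
      rcases eq_or_ne k j with rfl | h
      · simp
      · simp [Matrix.one_apply_ne h])
  have := key i
  rw [hinv] at this
  simpa using this
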